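/- Let à be the Kashaev operator on L²(ℝ) given by the kernel (Ãf)(β) = ∫_ℝ e^{2πiαβ} e^{πiβ² - πi/12} f(α) dα on Gaussian test functions. Then Ã³ = id; equivalently, the threefold composition of the integral kernel e^{2πiαβ+πiβ²-πi/12} with itself (using regularized Fresnel integrals) is the identity kernel δ(α-β). -/

import Mathlib

open MeasureTheory Real Complex

/-- The Gaussian-polynomial test class `W`. -/
def InW (f : ℝ → ℂ) : Prop :=
  f ∈ Submodule.span ℂ {g : ℝ → ℂ | ∃ (A : ℝ) (B : ℂ) (P : Polynomial ℂ), 0 < A ∧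
    g = fun x : ℝ => Complex.exp (-(A : ℂ) * (x : ℂ) ^ 2 / 2 + B * x) * P.eval (x : ℂ)}

/-- Kashaev's operator `Ã`: `(Ãf)(β) = ∫ e^{2πiαβ} e^{πiβ² - πi/12} f(α) dα`. -/
noncomputable def Atil (f : ℝ → ℂ) : ℝ → ℂ := fun β =>
  ∫ α : ℝ, Complex.exp (2 * (π : ℂ) * Complex.I * α * β) *
    Complex.exp ((π : ℂ) * Complex.I * (β : ℂ) ^ 2 - (π : ℂ) * Complex.I / 12) * f α

open Polynomial Metric

noncomputable section
namespace KA


/-- The real part of the exponent. -/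
lemma exp_re_aux (b c : ℂ) (x : ℝ) : (b * (x:ℂ)^2 + c * (x:ℂ)).re = b.re * x^2 + c.re * x := by
  simp [Complex.add_re, Complex.mul_re, ← Complex.ofReal_pow]

lemma norm_atom (n : ℕ) (b c : ℂ) (x : ℝ) :
    ‖(x:ℂ)^n * Complex.exp (b * (x:ℂ)^2 + c * (x:ℂ))‖
      = |x|^n * Real.exp (b.re * x^2 + c.re * x) := by
  rw [norm_mul, norm_pow, Complex.norm_exp, Complex.norm_real, Real.norm_eq_abs,
    exp_re_aux]

lemma continuous_atom (n : ℕ) (b c : ℂ) :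
    Continuous (fun x : ℝ => (x:ℂ)^n * Complex.exp (b * (x:ℂ)^2 + c * (x:ℂ))) := by
  apply (Complex.continuous_ofReal.pow n).mul
  apply Complex.continuous_exp.comp
  exact ((continuous_const.mul (Complex.continuous_ofReal.pow 2)).add
      (continuous_const.mul Complex.continuous_ofReal))

lemma integrable_expbound {b : ℂ} (hb : b.re < 0) (s : ℝ) :
    Integrable (fun x : ℝ => Real.exp (b.re * x^2 + s * x) + Real.exp (b.re * x^2 - s * x)) := by
  have key : ∀ t : ℝ, Integrable (fun x : ℝ => Real.exp (b.re * x^2 + t * x)) := by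
    intro t
    have h := (integrable_cexp_quadratic' (b := (b.re : ℂ))
      (by simpa using hb) (t : ℂ) 0).norm
    refine h.congr ?_
    filter_upwards with x
    rw [add_zero, Complex.norm_exp, exp_re_aux]
    simp
  exact (key s).add (by simpa [sub_eq_add_neg, neg_mul] using key (-s))

lemma atom_norm_le {b : ℂ} (n : ℕ) {c : ℂ} {t : ℝ} (hc : ‖c‖ ≤ t) (x : ℝ) :
    ‖(x:ℂ)^n * Complex.exp (b * (x:ℂ)^2 + c * (x:ℂ))‖
      ≤ Real.exp (b.re * x^2 + (n + t) * x) + Real.exp (b.re * x^2 - (n + t) * x) := by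
  rw [norm_atom]
  have h1 : |x|^n ≤ Real.exp (n * |x|) := by
    calc |x|^n ≤ (Real.exp |x|)^n := by
          apply pow_le_pow_left₀ (abs_nonneg x)
          have := Real.add_one_le_exp |x|
          linarith
      _ = Real.exp (n * |x|) := by rw [← Real.exp_nat_mul]
  have h2 : Real.exp (b.re * x^2 + c.re * x) ≤ Real.exp (b.re * x^2 + t * |x|) := by
    apply Real.exp_le_exp.2
    have : c.re * x ≤ t * |x| := by
      calc c.re * x ≤ |c.re * x| := le_abs_self _
        _ = |c.re| * |x| := abs_mul _ _
        _ ≤ t * |x| := by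
            apply mul_le_mul_of_nonneg_right _ (abs_nonneg x)
            exact (Complex.abs_re_le_norm c).trans hc
    linarith
  have h3 : |x|^n * Real.exp (b.re * x^2 + c.re * x)
      ≤ Real.exp (b.re * x^2 + (n + t) * |x|) := by
    calc |x|^n * Real.exp (b.re * x^2 + c.re * x)
        ≤ Real.exp (n * |x|) * Real.exp (b.re * x^2 + t * |x|) := by
          exact mul_le_mul h1 h2 (Real.exp_pos _).le (Real.exp_pos _).le
      _ = Real.exp (b.re * x^2 + (n + t) * |x|) := by
          rw [← Real.exp_add]; ring_nf
  refine h3.trans ?_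
  rcases le_or_gt 0 x with hx | hx
  · rw [_root_.abs_of_nonneg hx]
    exact le_add_of_nonneg_right (Real.exp_pos _).le
  · rw [_root_.abs_of_neg hx]
    have : b.re * x^2 + (↑n + t) * -x = b.re * x^2 - (↑n + t) * x := by ring
    rw [this]
    exact le_add_of_nonneg_left (Real.exp_pos _).le

lemma integrable_atom {b : ℂ} (hb : b.re < 0) (n : ℕ) (c : ℂ) :
    Integrable (fun x : ℝ => (x:ℂ)^n * Complex.exp (b * (x:ℂ)^2 + c * (x:ℂ))) := by
  refine Integrable.mono' (integrable_expbound hb (n + ‖c‖)) ?_ ?_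
  · exact (continuous_atom n b c).aestronglyMeasurable
  · filter_upwards with x
    exact atom_norm_le n le_rfl x

/-- The Gaussian transform `φ_b`. -/
def phi (b : ℂ) : ℂ → ℂ := fun z => (↑π / -b) ^ (1/2 : ℂ) * Complex.exp (-z^2 / (4*b))

lemma integral_atom_zero {b : ℂ} (hb : b.re < 0) (c : ℂ) :
    ∫ x : ℝ, Complex.exp (b * (x:ℂ)^2 + c * (x:ℂ)) = phi b c := by
  have h := integral_cexp_quadratic hb c 0
  simp only [add_zero, zero_sub] at h
  rw [h, phi]
  congr 1
  rw [neg_div]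

lemma hasDerivAt_integral_atom {b : ℂ} (hb : b.re < 0) (n : ℕ) (c₀ : ℂ) :
    HasDerivAt (fun c : ℂ => ∫ x : ℝ, (x:ℂ)^n * Complex.exp (b * (x:ℂ)^2 + c * (x:ℂ)))
      (∫ x : ℝ, (x:ℂ)^(n+1) * Complex.exp (b * (x:ℂ)^2 + c₀ * (x:ℂ))) c₀ := by
  set bound : ℝ → ℝ := fun x =>
    Real.exp (b.re * x^2 + ((n+1) + (‖c₀‖+1)) * x)
      + Real.exp (b.re * x^2 - ((n+1) + (‖c₀‖+1)) * x) with hbound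
  have key := hasDerivAt_integral_of_dominated_loc_of_deriv_le (μ := (volume : Measure ℝ))
    (F := fun (c : ℂ) (x : ℝ) => (x:ℂ)^n * Complex.exp (b * (x:ℂ)^2 + c * (x:ℂ)))
    (F' := fun (c : ℂ) (x : ℝ) => (x:ℂ)^(n+1) * Complex.exp (b * (x:ℂ)^2 + c * (x:ℂ)))
    (x₀ := c₀) (bound := bound) (Metric.ball_mem_nhds c₀ one_pos) ?_ ?_ ?_ ?_ ?_ ?_
  · exact key.2
  · filter_upwards with c
    exact (continuous_atom n b c).aestronglyMeasurable
  · exact integrable_atom hb n c₀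
  · exact (continuous_atom (n+1) b c₀).aestronglyMeasurable
  · filter_upwards with x
    intro c hc
    have hcle : ‖c‖ ≤ ‖c₀‖ + 1 := by
      have := mem_ball_iff_norm.1 hc
      calc ‖c‖ = ‖c₀ + (c - c₀)‖ := by ring_nf
        _ ≤ ‖c₀‖ + ‖c - c₀‖ := norm_add_le _ _
        _ ≤ ‖c₀‖ + 1 := by linarith
    have := atom_norm_le (b := b) (n+1) hcle x
    simpa [hbound] using this
  · exact integrable_expbound hb _
  · filter_upwards with x
    intro c _
    have h1 : HasDerivAt (fun c : ℂ => b * (x:ℂ)^2 + c * (x:ℂ)) (x:ℂ) c := by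
      simpa using ((hasDerivAt_id c).mul_const (x:ℂ)).const_add (b * (x:ℂ)^2)
    have h2 := (h1.cexp.const_mul ((x:ℂ)^n))
    refine h2.congr_deriv ?_
    ring

lemma integral_atom {b : ℂ} (hb : b.re < 0) (n : ℕ) (c : ℂ) :
    ∫ x : ℝ, (x:ℂ)^n * Complex.exp (b * (x:ℂ)^2 + c * (x:ℂ)) = iteratedDeriv n (phi b) c := by
  induction n generalizing c with
  | zero => simpa [iteratedDeriv_zero] using integral_atom_zero hb c
  | succ n ih =>
    rw [iteratedDeriv_succ,
      show iteratedDeriv n (phi b) = fun c => ∫ x : ℝ, (x:ℂ)^n *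
        Complex.exp (b * (x:ℂ)^2 + c * (x:ℂ)) from funext fun c => (ih c).symm]
    exact ((hasDerivAt_integral_atom hb n c).deriv).symm

/-- Hermite-type polynomials for the iterated derivatives of `phi`. -/
def gp (b : ℂ) : ℕ → Polynomial ℂ
  | 0 => 1
  | n+1 => (gp b n).derivative + gp b n * (Polynomial.C (-(2*b)⁻¹) * Polynomial.X)

lemma hasDerivAt_gpexp {b : ℂ} (hb : b ≠ 0) (n : ℕ) (z : ℂ) :
    HasDerivAt (fun z : ℂ => (↑π / -b) ^ (1/2 : ℂ) * ((gp b n).eval z * Complex.exp (-z^2 / (4*b))))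
      ((↑π / -b) ^ (1/2 : ℂ) * ((gp b (n+1)).eval z * Complex.exp (-z^2 / (4*b)))) z := by
  have he : HasDerivAt (fun z : ℂ => Complex.exp (-z^2 / (4*b)))
      (Complex.exp (-z^2 / (4*b)) * (-(2*b)⁻¹ * z)) z := by
    have hq : HasDerivAt (fun z : ℂ => -z^2 / (4*b)) (-(2*b)⁻¹ * z) z := by
      have := ((hasDerivAt_pow 2 z).neg).div_const (4*b)
      refine this.congr_deriv ?_
      field_simp
      ring
    exact hq.cexp
  have hp := (gp b n).hasDerivAt z
  have := (hp.mul he).const_mul ((↑π / -b) ^ (1/2 : ℂ))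
  refine this.congr_deriv ?_
  simp only [gp, Polynomial.eval_add, Polynomial.eval_mul, Polynomial.eval_C, Polynomial.eval_X]
  ring

lemma iteratedDeriv_phi {b : ℂ} (hb : b ≠ 0) (n : ℕ) :
    iteratedDeriv n (phi b)
      = fun z => (↑π / -b) ^ (1/2 : ℂ) * ((gp b n).eval z * Complex.exp (-z^2 / (4*b))) := by
  induction n with
  | zero => funext z; simp [iteratedDeriv_zero, phi, gp]
  | succ n ih =>
    funext z
    rw [iteratedDeriv_succ, ih]
    exact (hasDerivAt_gpexp hb n z).deriv

lemma hasDerivAt_iteratedDeriv_phi {b : ℂ} (hb : b ≠ 0) (n : ℕ) (z : ℂ) :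
    HasDerivAt (iteratedDeriv n (phi b)) (iteratedDeriv (n+1) (phi b) z) z := by
  rw [iteratedDeriv_phi hb n, iteratedDeriv_phi hb (n+1)]
  exact hasDerivAt_gpexp hb n z

lemma gp_zero (b : ℂ) : gp b 0 = 1 := rfl
lemma gp_succ (b : ℂ) (n : ℕ) :
  gp b (n+1) = (gp b n).derivative + gp b n * (Polynomial.C (-(2*b)⁻¹) * Polynomial.X) := rfl


/-! kernel basics -/

lemma kernel_eq (α β : ℝ) : Complex.exp (2 * (π : ℂ) * Complex.I * α * β) *
    Complex.exp ((π : ℂ) * Complex.I * (β : ℂ) ^ 2 - (π : ℂ) * Complex.I / 12)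
    = Complex.exp (((2*π*α*β : ℝ) : ℂ) * Complex.I) *
      Complex.exp (((π*β^2 - π/12 : ℝ) : ℂ) * Complex.I) := by
  congr 2 <;> push_cast <;> ring

lemma norm_kernel (α β : ℝ) : ‖Complex.exp (2 * (π : ℂ) * Complex.I * α * β) *
    Complex.exp ((π : ℂ) * Complex.I * (β : ℂ) ^ 2 - (π : ℂ) * Complex.I / 12)‖ = 1 := by
  rw [kernel_eq, norm_mul]
  rw [Complex.norm_exp_ofReal_mul_I,
    Complex.norm_exp_ofReal_mul_I, mul_one]

lemma integrable_kernel_mul {f : ℝ → ℂ} (hf : Integrable f) (γ : ℝ) :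
    Integrable (fun α : ℝ => Complex.exp (2 * (π : ℂ) * Complex.I * α * γ) *
      Complex.exp ((π : ℂ) * Complex.I * (γ : ℂ) ^ 2 - (π : ℂ) * Complex.I / 12) * f α) := by
  apply Integrable.bdd_mul (c := 1) hf
  · apply Continuous.aestronglyMeasurable
    apply Continuous.mul
    · exact Complex.continuous_exp.comp (by continuity)
    · exact continuous_const
  · exact Filter.Eventually.of_forall (fun α => le_of_eq (norm_kernel α γ))

/-- The closed form of `Atil` applied to a monomial Gaussian atom. -/
lemma atil_atom {b : ℂ} (hb : b.re < 0) (n : ℕ) (c : ℂ) (β : ℝ) :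
    Atil (fun x : ℝ => (x:ℂ)^n * Complex.exp (b * (x:ℂ)^2 + c * (x:ℂ))) β
      = Complex.exp ((π : ℂ) * Complex.I * (β : ℂ) ^ 2 - (π : ℂ) * Complex.I / 12) *
        iteratedDeriv n (phi b) (c + 2*π*Complex.I*β) := by
  rw [Atil]
  have h1 : ∀ α : ℝ, Complex.exp (2 * (π : ℂ) * Complex.I * α * β) *
      Complex.exp ((π : ℂ) * Complex.I * (β : ℂ) ^ 2 - (π : ℂ) * Complex.I / 12) *
      ((α:ℂ)^n * Complex.exp (b * (α:ℂ)^2 + c * (α:ℂ)))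
      = Complex.exp ((π : ℂ) * Complex.I * (β : ℂ) ^ 2 - (π : ℂ) * Complex.I / 12) *
        ((α:ℂ)^n * Complex.exp (b * (α:ℂ)^2 + (c + 2*π*Complex.I*β) * (α:ℂ))) := by
    intro α
    rw [show b * (α:ℂ)^2 + (c + 2*π*Complex.I*β) * (α:ℂ)
        = (2 * (π : ℂ) * Complex.I * α * β) + (b * (α:ℂ)^2 + c * (α:ℂ)) from by ring]
    simp only [Complex.exp_add]
    ring
  simp_rw [h1]
  rw [integral_const_mul, integral_atom hb n _]

/-! The S-class of functions -/

def Sfun (K : ℂ) (Q : Polynomial ℂ) (b' v w : ℂ) (N : ℕ) (r : ℕ → Polynomial ℂ)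
    (c : ℂ) (β : ℝ) : ℂ :=
  K * Complex.exp (Q.eval c + b' * (β:ℂ)^2 + (v*c+w) * (β:ℂ)) *
    ∑ k ∈ Finset.range N, (r k).eval c * (β:ℂ)^k

def dOp (Q : Polynomial ℂ) (v : ℂ) (r : ℕ → Polynomial ℂ) : ℕ → Polynomial ℂ := fun k =>
  (r k).derivative + r k * Q.derivative + (if k = 0 then 0 else Polynomial.C v * r (k-1))

def TF (K : ℂ) (Q : Polynomial ℂ) (b' v w : ℂ) (N : ℕ) (r : ℕ → Polynomial ℂ)
    (c : ℂ) (γ : ℝ) : ℂ :=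
  K * (↑π / -b') ^ (1/2 : ℂ) * Complex.exp (-(π:ℂ)*Complex.I/12) *
    Complex.exp (Q.eval c + (π:ℂ)*Complex.I*(γ:ℂ)^2 - (v*c+w+2*π*Complex.I*γ)^2/(4*b')) *
    ∑ k ∈ Finset.range N, (r k).eval c * (gp b' k).eval (v*c+w+2*π*Complex.I*γ)

lemma dOp_vanish {Q : Polynomial ℂ} {v : ℂ} {r : ℕ → Polynomial ℂ} {N : ℕ}
    (hr : ∀ k, N ≤ k → r k = 0) : ∀ k, N+1 ≤ k → dOp Q v r k = 0 := by
  intro k hk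
  have h1 : r k = 0 := hr k (by omega)
  have h2 : r (k-1) = 0 := hr _ (by omega)
  simp [dOp, h1, h2]

lemma dOp_eval {Q : Polynomial ℂ} {v : ℂ} {r : ℕ → Polynomial ℂ} (k : ℕ) (c : ℂ) :
    (dOp Q v r k).eval c = (r k).derivative.eval c + (r k).eval c * Q.derivative.eval c
      + (if k = 0 then 0 else v * (r (k-1)).eval c) := by
  by_cases hk : k = 0 <;> simp [dOp, hk]

/-- expansion of the `dOp`-sum -/
lemma dOp_sum_eval {Q : Polynomial ℂ} {v : ℂ} {r : ℕ → Polynomial ℂ} {N : ℕ}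
    (hr : ∀ k, N ≤ k → r k = 0) (c : ℂ) (g : ℕ → ℂ) :
    ∑ k ∈ Finset.range (N+1), (dOp Q v r k).eval c * g k
      = (∑ k ∈ Finset.range N, (r k).derivative.eval c * g k)
        + Q.derivative.eval c * (∑ k ∈ Finset.range N, (r k).eval c * g k)
        + v * (∑ k ∈ Finset.range N, (r k).eval c * g (k+1)) := by
  simp_rw [dOp_eval, add_mul, Finset.sum_add_distrib]
  congr 1
  · congr 1
    · rw [Finset.sum_range_succ, hr N le_rfl]
      simp
    · rw [Finset.sum_range_succ, hr N le_rfl, Finset.mul_sum]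
      simp only [Polynomial.eval_zero, zero_mul, mul_zero, add_zero]
      exact Finset.sum_congr rfl fun k _ => by ring
  · rw [Finset.sum_range_succ']
    simp only [Nat.add_eq_zero, Nat.succ_ne_zero, and_false, if_false, one_ne_zero,
      if_pos, reduceIte, zero_mul, add_zero, Nat.add_sub_cancel, Finset.mul_sum]
    exact Finset.sum_congr rfl fun k _ => by ring

lemma hasDerivAt_Sfun (K : ℂ) (Q : Polynomial ℂ) (b' v w : ℂ) (N : ℕ)
    (r : ℕ → Polynomial ℂ) (hr : ∀ k, N ≤ k → r k = 0) (c : ℂ) (β : ℝ) :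
    HasDerivAt (fun c => Sfun K Q b' v w N r c β)
      (Sfun K Q b' v w (N+1) (dOp Q v r) c β) c := by
  have hE : HasDerivAt (fun c : ℂ => Q.eval c + b' * (β:ℂ)^2 + (v*c+w) * (β:ℂ))
      (Q.derivative.eval c + v * (β:ℂ)) c := by
    have h2 : HasDerivAt (fun c : ℂ => (v*c+w) * (β:ℂ)) (v * (β:ℂ)) c := by
      simpa using (((hasDerivAt_id c).const_mul v).add_const w).mul_const (β:ℂ)
    exact ((Q.hasDerivAt c).add_const (b' * (β:ℂ)^2)).add h2
  have hP : HasDerivAt (fun c : ℂ => ∑ k ∈ Finset.range N, (r k).eval c * (β:ℂ)^k)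
      (∑ k ∈ Finset.range N, (r k).derivative.eval c * (β:ℂ)^k) c :=
    HasDerivAt.fun_sum (fun k _ => ((r k).hasDerivAt c).mul_const _)
  have h := (hE.cexp.const_mul K).mul hP
  refine h.congr_deriv ?_
  have hshift : ∑ k ∈ Finset.range N, (r k).eval c * (β:ℂ)^(k+1)
      = (β:ℂ) * ∑ k ∈ Finset.range N, (r k).eval c * (β:ℂ)^k := by
    rw [Finset.mul_sum]
    exact Finset.sum_congr rfl fun k _ => by ring
  simp only [Sfun]
  rw [dOp_sum_eval hr, hshift]
  ring

lemma atil_Sfun {b' : ℂ} (hb' : b'.re < 0) (K : ℂ) (Q : Polynomial ℂ) (v w : ℂ) (N : ℕ)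
    (r : ℕ → Polynomial ℂ) (c : ℂ) (γ : ℝ) :
    Atil (fun β => Sfun K Q b' v w N r c β) γ = TF K Q b' v w N r c γ := by
  rw [Atil]
  have h1 : ∀ α : ℝ, Complex.exp (2 * (π : ℂ) * Complex.I * α * γ) *
      Complex.exp ((π : ℂ) * Complex.I * (γ : ℂ) ^ 2 - (π : ℂ) * Complex.I / 12) *
      Sfun K Q b' v w N r c α
      = ∑ k ∈ Finset.range N, (K * Complex.exp (Q.eval c) * (r k).eval c) *
          (Complex.exp (2 * (π : ℂ) * Complex.I * α * γ) *
            Complex.exp ((π : ℂ) * Complex.I * (γ : ℂ) ^ 2 - (π : ℂ) * Complex.I / 12) *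
            ((α:ℂ)^k * Complex.exp (b' * (α:ℂ)^2 + (v*c+w) * (α:ℂ)))) := by
    intro α
    simp only [Sfun, Finset.mul_sum]
    refine Finset.sum_congr rfl fun k _ => ?_
    rw [show Q.eval c + b' * (α:ℂ)^2 + (v*c+w) * (α:ℂ)
        = Q.eval c + (b' * (α:ℂ)^2 + (v*c+w) * (α:ℂ)) from by ring, Complex.exp_add]
    ring
  simp_rw [h1]
  rw [integral_finset_sum _ (fun k _ =>
    ((integrable_kernel_mul (integrable_atom hb' k (v*c+w)) γ).const_mul _))]
  simp_rw [integral_const_mul]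
  have h2 : ∀ k : ℕ, (∫ α : ℝ, Complex.exp (2 * (π : ℂ) * Complex.I * α * γ) *
      Complex.exp ((π : ℂ) * Complex.I * (γ : ℂ) ^ 2 - (π : ℂ) * Complex.I / 12) *
      ((α:ℂ)^k * Complex.exp (b' * (α:ℂ)^2 + (v*c+w) * (α:ℂ))))
      = Complex.exp ((π : ℂ) * Complex.I * (γ : ℂ) ^ 2 - (π : ℂ) * Complex.I / 12) *
        ((↑π / -b') ^ (1/2 : ℂ) * ((gp b' k).eval (v*c+w+2*π*Complex.I*γ) *
          Complex.exp (-(v*c+w+2*π*Complex.I*γ)^2 / (4*b')))) := by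
    intro k
    have := atil_atom hb' k (v*c+w) γ
    rw [Atil] at this
    rw [this, iteratedDeriv_phi (by intro h; rw [h] at hb'; simp at hb')]
  simp_rw [h2]
  rw [TF, Finset.mul_sum]
  refine Finset.sum_congr rfl fun k _ => ?_
  simp only [neg_mul, neg_div, Complex.exp_neg, Complex.exp_sub, Complex.exp_add]
  ring

lemma hasDerivAt_TF {b' : ℂ} (hb0 : b' ≠ 0) (K : ℂ) (Q : Polynomial ℂ) (v w : ℂ) (N : ℕ)
    (r : ℕ → Polynomial ℂ) (hr : ∀ k, N ≤ k → r k = 0) (c : ℂ) (γ : ℝ) :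
    HasDerivAt (fun c => TF K Q b' v w N r c γ)
      (TF K Q b' v w (N+1) (dOp Q v r) c γ) c := by
  have hZd : ∀ c : ℂ, HasDerivAt (fun c : ℂ => v*c+w+2*π*Complex.I*γ) v c := by
    intro c
    simpa using ((((hasDerivAt_id c).const_mul v).add_const w).add_const
      (2*π*Complex.I*γ))
  have hE : HasDerivAt (fun c : ℂ => Q.eval c + (π:ℂ)*Complex.I*(γ:ℂ)^2
        - (v*c+w+2*π*Complex.I*γ)^2/(4*b'))
      (Q.derivative.eval c - 2*(v*c+w+2*π*Complex.I*γ)*v/(4*b')) c := by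
    have h2 : HasDerivAt (fun c : ℂ => (v*c+w+2*π*Complex.I*γ)^2 / (4*b'))
        (2*(v*c+w+2*π*Complex.I*γ)*v/(4*b')) c := by
      have := ((hZd c).pow 2).div_const (4*b')
      simpa [pow_one] using this
    exact ((Q.hasDerivAt c).add_const ((π:ℂ)*Complex.I*(γ:ℂ)^2)).sub h2
  have hG : HasDerivAt (fun c : ℂ => ∑ k ∈ Finset.range N,
        (r k).eval c * (gp b' k).eval (v*c+w+2*π*Complex.I*γ))
      (∑ k ∈ Finset.range N, ((r k).derivative.eval c *
          (gp b' k).eval (v*c+w+2*π*Complex.I*γ)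
        + (r k).eval c * ((gp b' k).derivative.eval (v*c+w+2*π*Complex.I*γ) * v))) c := by
    apply HasDerivAt.fun_sum
    intro k _
    exact ((r k).hasDerivAt c).mul (((gp b' k).hasDerivAt _).comp c (hZd c))
  have h := (hE.cexp.const_mul
      (K * (↑π / -b') ^ (1/2 : ℂ) * Complex.exp (-(π:ℂ)*Complex.I/12))).mul hG
  refine h.congr_deriv ?_
  rw [TF, dOp_sum_eval hr]
  have hgp : ∀ k : ℕ, (gp b' (k+1)).eval (v*c+w+2*π*Complex.I*γ)
      = (gp b' k).derivative.eval (v*c+w+2*π*Complex.I*γ)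
        + (gp b' k).eval (v*c+w+2*π*Complex.I*γ) * (-(2*b')⁻¹ * (v*c+w+2*π*Complex.I*γ)) := by
    intro k
    rw [gp_succ]
    simp
  have hG1 : ∑ k ∈ Finset.range N, (r k).eval c * (gp b' (k+1)).eval (v*c+w+2*π*Complex.I*γ)
      = (∑ k ∈ Finset.range N, (r k).eval c *
          (gp b' k).derivative.eval (v*c+w+2*π*Complex.I*γ))
        + (-(2*b')⁻¹ * (v*c+w+2*π*Complex.I*γ)) * ∑ k ∈ Finset.range N,
            (r k).eval c * (gp b' k).eval (v*c+w+2*π*Complex.I*γ) := by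
    simp_rw [hgp, mul_add]
    rw [Finset.sum_add_distrib]
    congr 1
    rw [Finset.mul_sum]
    exact Finset.sum_congr rfl fun k _ => by ring
  have hGsplit : (∑ k ∈ Finset.range N, ((r k).derivative.eval c *
        (gp b' k).eval (v*c+w+2*π*Complex.I*γ)
      + (r k).eval c * ((gp b' k).derivative.eval (v*c+w+2*π*Complex.I*γ) * v)))
      = (∑ k ∈ Finset.range N, (r k).derivative.eval c *
          (gp b' k).eval (v*c+w+2*π*Complex.I*γ))
        + v * ∑ k ∈ Finset.range N, (r k).eval c *
            (gp b' k).derivative.eval (v*c+w+2*π*Complex.I*γ) := by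
    rw [Finset.sum_add_distrib]
    congr 1
    rw [Finset.mul_sum]
    exact Finset.sum_congr rfl fun k _ => by ring
  rw [hG1, hGsplit]
  field_simp
  ring

lemma GS {b' : ℂ} (hb' : b'.re < 0) (K : ℂ) (Q : Polynomial ℂ) (v w : ℂ) :
    ∀ (n : ℕ) (N : ℕ) (r : ℕ → Polynomial ℂ), (∀ k, N ≤ k → r k = 0) → ∀ (c : ℂ) (γ : ℝ),
    Atil (fun β => iteratedDeriv n (fun c' => Sfun K Q b' v w N r c' β) c) γ
      = iteratedDeriv n (fun c' => Atil (fun β => Sfun K Q b' v w N r c' β) γ) c := by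
  have hb0 : b' ≠ 0 := by intro h; rw [h] at hb'; simp at hb'
  intro n
  induction n with
  | zero => intro N r hr c γ; simp only [iteratedDeriv_zero]
  | succ n ih =>
    intro N r hr c γ
    have hstep1 : (fun β : ℝ => iteratedDeriv (n+1) (fun c' => Sfun K Q b' v w N r c' β) c)
        = fun β : ℝ => iteratedDeriv n (fun c' => Sfun K Q b' v w (N+1) (dOp Q v r) c' β) c := by
      funext β
      rw [iteratedDeriv_succ']
      congr 1
      funext c'
      exact (hasDerivAt_Sfun K Q b' v w N r hr c' β).deriv
    rw [hstep1, ih (N+1) (dOp Q v r) (dOp_vanish hr) c γ, iteratedDeriv_succ']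
    congr 1
    funext c'
    have h1 : deriv (fun c'' => Atil (fun β => Sfun K Q b' v w N r c'' β) γ) c'
        = deriv (fun c'' => TF K Q b' v w N r c'' γ) c' := by
      congr 1
      funext c''
      exact atil_Sfun hb' K Q v w N r c'' γ
    rw [h1, (hasDerivAt_TF hb0 K Q v w N r hr c' γ).deriv,
      ← atil_Sfun hb' K Q v w (N+1) (dOp Q v r) c' γ]


/-! Stage-1 presentation and composition -/

def r1 : ℕ → Polynomial ℂ := fun k => if k = 0 then 1 else 0

lemma hr1 : ∀ k, 1 ≤ k → r1 k = 0 := by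
  intro k hk
  have : k ≠ 0 := by omega
  simp [r1, this]

lemma hasDerivAt_iteratedDeriv_phi' {b : ℂ} (hb : b ≠ 0) (n : ℕ) (z : ℂ) :
    HasDerivAt (iteratedDeriv n (phi b)) (iteratedDeriv (n+1) (phi b) z) z :=
  hasDerivAt_iteratedDeriv_phi hb n z

lemma iter_shift_const {b : ℂ} (hb : b ≠ 0) (M a : ℂ) (n : ℕ) :
    ∀ c : ℂ, iteratedDeriv n (fun z => M * phi b (z + a)) c
      = M * iteratedDeriv n (phi b) (c + a) := by
  induction n with
  | zero => intro c; simp [iteratedDeriv_zero]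
  | succ n ih =>
    intro c
    rw [iteratedDeriv_succ,
      show iteratedDeriv n (fun z => M * phi b (z + a))
        = fun z => M * iteratedDeriv n (phi b) (z + a) from funext fun z => ih z]
    have h : HasDerivAt (fun z : ℂ => M * iteratedDeriv n (phi b) (z + a))
        (M * iteratedDeriv (n+1) (phi b) (c + a)) c := by
      have h1 : HasDerivAt (fun z : ℂ => z + a) 1 c := (hasDerivAt_id c).add_const a
      have h2 := (hasDerivAt_iteratedDeriv_phi' hb n (c+a)).comp c h1
      simpa using h2.const_mul M
    exact h.deriv

lemma Sfun_one_eq {b : ℂ} (hb : b ≠ 0) (c' : ℂ) (β : ℝ) :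
    Sfun ((↑π / -b) ^ (1/2:ℂ) * Complex.exp (-(π:ℂ)*Complex.I/12))
      (Polynomial.C (-(4*b)⁻¹) * Polynomial.X^2) ((π:ℂ)*Complex.I + (π:ℂ)^2/b)
      (-((π:ℂ)*Complex.I)/b) 0 1 r1 c' β
      = Complex.exp ((π:ℂ)*Complex.I*(β:ℂ)^2 - (π:ℂ)*Complex.I/12)
          * phi b (c' + 2*π*Complex.I*β) := by
  have hx : Complex.exp ((π:ℂ)*Complex.I*(β:ℂ)^2 - (π:ℂ)*Complex.I/12) *
      ((↑π / -b) ^ (1/2:ℂ) * Complex.exp (-(c' + 2*π*Complex.I*β)^2 / (4*b)))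
      = (↑π / -b) ^ (1/2:ℂ) * Complex.exp (((π:ℂ)*Complex.I*(β:ℂ)^2 - (π:ℂ)*Complex.I/12)
          + (-(c' + 2*π*Complex.I*β)^2 / (4*b))) := by
    rw [Complex.exp_add]
    ring
  rw [Sfun, phi, Finset.sum_range_one]
  have hr10 : (r1 0).eval c' = 1 := by simp [r1]
  rw [hr10, pow_zero, mul_one, mul_one, hx, mul_assoc, ← Complex.exp_add]
  congr 1
  simp only [Polynomial.eval_mul, Polynomial.eval_C, Polynomial.eval_pow, Polynomial.eval_X]
  congr 1
  linear_combination ((π:ℂ)^2 * (β:ℂ)^2 / b) * Complex.I_sq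

lemma atil_atom_S {b : ℂ} (hb : b.re < 0) (n : ℕ) (c : ℂ) (β : ℝ) :
    Atil (fun x : ℝ => (x:ℂ)^n * Complex.exp (b * (x:ℂ)^2 + c * (x:ℂ))) β
      = iteratedDeriv n (fun c' =>
          Sfun ((↑π / -b) ^ (1/2:ℂ) * Complex.exp (-(π:ℂ)*Complex.I/12))
            (Polynomial.C (-(4*b)⁻¹) * Polynomial.X^2) ((π:ℂ)*Complex.I + (π:ℂ)^2/b)
            (-((π:ℂ)*Complex.I)/b) 0 1 r1 c' β) c := by
  have hb0 : b ≠ 0 := fun h => by rw [h] at hb; simp at hb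
  rw [atil_atom hb n c β,
    show (fun c' => Sfun ((↑π / -b) ^ (1/2:ℂ) * Complex.exp (-(π:ℂ)*Complex.I/12))
      (Polynomial.C (-(4*b)⁻¹) * Polynomial.X^2) ((π:ℂ)*Complex.I + (π:ℂ)^2/b)
      (-((π:ℂ)*Complex.I)/b) 0 1 r1 c' β)
      = fun c' => Complex.exp ((π:ℂ)*Complex.I*(β:ℂ)^2 - (π:ℂ)*Complex.I/12)
          * phi b (c' + 2*π*Complex.I*β) from funext fun c' => Sfun_one_eq hb0 c' β,
    iter_shift_const hb0 _ _ n c]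

lemma TF_r1_eq {b' : ℂ} (hb' : b'.re < 0) (K : ℂ) (Q : Polynomial ℂ) (v w : ℂ)
    (c : ℂ) (γ : ℝ) :
    TF K Q b' v w 1 r1 c γ
      = Sfun (K * (↑π / -b') ^ (1/2:ℂ) * Complex.exp (-(π:ℂ)*Complex.I/12))
          (Q - Polynomial.C ((4*b')⁻¹) * (Polynomial.C w + Polynomial.C v * Polynomial.X)^2)
          ((π:ℂ)*Complex.I + (π:ℂ)^2/b') (-((π:ℂ)*Complex.I)*v/b')
          (-((π:ℂ)*Complex.I)*w/b') 1 r1 c γ := by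
  have hb0 : b' ≠ 0 := fun h => by rw [h] at hb'; simp at hb'
  rw [TF, Sfun]
  simp only [r1, Finset.sum_range_one, reduceIte, Polynomial.eval_one, one_mul, pow_zero,
    mul_one, gp_zero]
  congr 1
  congr 1
  simp only [Polynomial.eval_sub, Polynomial.eval_mul, Polynomial.eval_C, Polynomial.eval_pow,
    Polynomial.eval_add, Polynomial.eval_X]
  field_simp
  linear_combination (-(4:ℂ) * (π:ℂ)^2 * (γ:ℂ)^2) * Complex.I_sq

lemma stage {b' : ℂ} (hb' : b'.re < 0) (K : ℂ) (Q : Polynomial ℂ) (v w : ℂ) (n : ℕ)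
    (c : ℂ) (γ : ℝ) :
    Atil (fun β => iteratedDeriv n (fun c' => Sfun K Q b' v w 1 r1 c' β) c) γ
      = iteratedDeriv n (fun c' =>
          Sfun (K * (↑π / -b') ^ (1/2:ℂ) * Complex.exp (-(π:ℂ)*Complex.I/12))
            (Q - Polynomial.C ((4*b')⁻¹) * (Polynomial.C w + Polynomial.C v * Polynomial.X)^2)
            ((π:ℂ)*Complex.I + (π:ℂ)^2/b') (-((π:ℂ)*Complex.I)*v/b')
            (-((π:ℂ)*Complex.I)*w/b') 1 r1 c' γ) c := by
  rw [GS hb' K Q v w n 1 r1 hr1 c γ]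
  congr 1
  funext c'
  rw [atil_Sfun hb' K Q v w 1 r1 c' γ, TF_r1_eq hb' K Q v w c' γ]

lemma iter_exp_lin (u t : ℂ) : ∀ (n : ℕ) (c : ℂ),
    iteratedDeriv n (fun z : ℂ => Complex.exp (u + z*t)) c = t^n * Complex.exp (u + c*t) := by
  intro n
  induction n with
  | zero => intro c; simp [iteratedDeriv_zero]
  | succ n ih =>
    intro c
    rw [iteratedDeriv_succ, show iteratedDeriv n (fun z : ℂ => Complex.exp (u + z*t))
      = fun c => t^n * Complex.exp (u + c*t) from funext fun c => ih c]
    have h : HasDerivAt (fun c : ℂ => t^n * Complex.exp (u + c*t))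
        (t^(n+1) * Complex.exp (u+c*t)) c := by
      have h1 : HasDerivAt (fun c : ℂ => u + c*t) t c := by
        simpa using ((hasDerivAt_id c).mul_const t).const_add u
      have := h1.cexp.const_mul (t^n)
      refine this.congr_deriv ?_
      ring
    exact h.deriv

/-! scalar identities -/

lemma Tb_re_neg {z : ℂ} (hz : z.re < 0) : ((π:ℂ)*Complex.I + (π:ℂ)^2/z).re < 0 := by
  have hz0 : z ≠ 0 := fun h => by rw [h] at hz; simp at hz
  have h1 : ((π:ℂ)*Complex.I + (π:ℂ)^2/z).re = π^2 * z.re / Complex.normSq z := by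
    rw [Complex.add_re, Complex.div_re]
    simp [Complex.mul_re, Complex.mul_im, ← Complex.ofReal_pow, Complex.normSq]
  rw [h1]
  apply div_neg_of_neg_of_pos
  · exact mul_neg_of_pos_of_neg (by positivity) hz
  · exact Complex.normSq_pos.2 hz0

lemma pi_div_neg_re_pos {z : ℂ} (hz : z.re < 0) : 0 < ((π:ℂ)/(-z)).re := by
  have hz0 : z ≠ 0 := fun h => by rw [h] at hz; simp at hz
  have h1 : ((π:ℂ)/(-z)).re = π * (-z.re) / Complex.normSq (-z) := by
    rw [Complex.div_re]
    simp
  rw [h1]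
  apply div_pos
  · have := Real.pi_pos
    nlinarith
  · exact Complex.normSq_pos.2 (by simpa using hz0)

lemma sector_sqrt {z : ℂ} (hz : 0 < z.re) : |(z^(1/2:ℂ)).im| < (z^(1/2:ℂ)).re := by
  have hz0 : z ≠ 0 := by intro h; rw [h] at hz; simp at hz
  have hpi := Real.pi_pos
  rw [Complex.cpow_def_of_ne_zero hz0]
  have harg : |Complex.arg z| < π/2 := Complex.abs_arg_lt_pi_div_two_iff.2 (Or.inl hz)
  rw [Complex.exp_re, Complex.exp_im]
  have him : (Complex.log z * (1/2:ℂ)).im = Complex.arg z / 2 := by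
    simp [Complex.mul_im, Complex.log_im]
    ring
  rw [him]
  have ht4 : |Complex.arg z / 2| < π/4 := by
    rw [abs_div]
    simp only [Nat.abs_ofNat]
    linarith
  set t := Complex.arg z / 2 with ht
  obtain ⟨htl, htr⟩ := abs_lt.1 ht4
  rw [abs_mul, abs_of_pos (Real.exp_pos _)]
  apply mul_lt_mul_of_pos_left _ (Real.exp_pos _)
  have hc1 : 0 < Real.cos (t + π/4) := by
    apply Real.cos_pos_of_mem_Ioo
    constructor <;> [linarith; linarith]
  have hc2 : 0 < Real.cos (t - π/4) := by
    apply Real.cos_pos_of_mem_Ioo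
    constructor <;> [linarith; linarith]
  rw [Real.cos_add, Real.cos_pi_div_four, Real.sin_pi_div_four] at hc1
  rw [Real.cos_sub, Real.cos_pi_div_four, Real.sin_pi_div_four] at hc2
  have hs2 : 0 < Real.sqrt 2 := Real.sqrt_pos.2 (by norm_num)
  rw [abs_lt]
  constructor <;> nlinarith

lemma sq_half {z : ℂ} (hz0 : z ≠ 0) : (z^(1/2:ℂ))^2 = z := by
  rw [sq, ← Complex.cpow_add _ _ hz0]
  norm_num

lemma sector_mul_re {w u : ℂ} (hw : |w.im| < w.re) (hu : |u.im| < u.re) : 0 < (w*u).re := by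
  rw [Complex.mul_re]
  have h1 : |w.im| * |u.im| < w.re * u.re :=
    mul_lt_mul'' hw hu (abs_nonneg _) (abs_nonneg _)
  have h2 : w.im * u.im ≤ |w.im| * |u.im| := by
    calc w.im * u.im ≤ |w.im * u.im| := le_abs_self _
      _ = |w.im| * |u.im| := abs_mul _ _
  linarith

lemma sector_mul_abs {w u : ℂ} (hw : |w.im| < w.re) (hu : 0 < u.re) :
    0 < (w*u).re + |(w*u).im| := by
  rw [Complex.mul_re, Complex.mul_im]
  obtain ⟨hw1, hw2⟩ := abs_lt.1 hw
  rcases le_or_gt 0 u.im with h | h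
  · have habs : (w.re*u.im + w.im*u.re) ≤ |w.re*u.im + w.im*u.re| := le_abs_self _
    nlinarith
  · have habs : -(w.re*u.im + w.im*u.re) ≤ |w.re*u.im + w.im*u.re| := neg_le_abs _
    nlinarith

lemma exp_quarter_re : (Complex.exp ((π:ℂ)*Complex.I/4)).re = Real.cos (π/4) := by
  rw [show (π:ℂ)*Complex.I/4 = ((π/4 : ℝ):ℂ)*Complex.I from by push_cast; ring,
    Complex.exp_ofReal_mul_I_re]

lemma exp_quarter_im : (Complex.exp ((π:ℂ)*Complex.I/4)).im = Real.sin (π/4) := by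
  rw [show (π:ℂ)*Complex.I/4 = ((π/4 : ℝ):ℂ)*Complex.I from by push_cast; ring,
    Complex.exp_ofReal_mul_I_im]

/-- Branch-correct product of the three square roots. -/
lemma sqrt3 {z0 z1 z2 : ℂ} (h0 : 0 < z0.re) (h1 : 0 < z1.re) (h2 : 0 < z2.re)
    (hprod : z0*z1*z2 = Complex.I) :
    z0^(1/2:ℂ) * z1^(1/2:ℂ) * z2^(1/2:ℂ) = Complex.exp ((π:ℂ)*Complex.I/4) := by
  have hz00 : z0 ≠ 0 := by intro h; rw [h] at h0; simp at h0
  have hz10 : z1 ≠ 0 := by intro h; rw [h] at h1; simp at h1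
  have hz20 : z2 ≠ 0 := by intro h; rw [h] at h2; simp at h2
  have hx2 : (z0^(1/2:ℂ) * z1^(1/2:ℂ) * z2^(1/2:ℂ))^2 = Complex.I := by
    rw [mul_pow, mul_pow, sq_half hz00, sq_half hz10, sq_half hz20, hprod]
  have hy2 : (Complex.exp ((π:ℂ)*Complex.I/4))^2 = Complex.I := by
    rw [sq, ← Complex.exp_add,
      show (π:ℂ)*Complex.I/4 + (π:ℂ)*Complex.I/4 = ((π/2 : ℝ):ℂ)*Complex.I from by
        push_cast; ring,
      Complex.exp_mul_I, ← Complex.ofReal_cos, ← Complex.ofReal_sin,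
      Real.cos_pi_div_two, Real.sin_pi_div_two]
    simp
  have hfac : (z0^(1/2:ℂ) * z1^(1/2:ℂ) * z2^(1/2:ℂ) - Complex.exp ((π:ℂ)*Complex.I/4)) *
      (z0^(1/2:ℂ) * z1^(1/2:ℂ) * z2^(1/2:ℂ) + Complex.exp ((π:ℂ)*Complex.I/4)) = 0 := by
    have hd : (z0^(1/2:ℂ) * z1^(1/2:ℂ) * z2^(1/2:ℂ))^2
        - (Complex.exp ((π:ℂ)*Complex.I/4))^2 = 0 := by
      rw [hx2, hy2]
      ring
    linear_combination hd
  rcases mul_eq_zero.1 hfac with h | h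
  · exact sub_eq_zero.1 h
  · exfalso
    have hxpos : 0 < (z0^(1/2:ℂ) * z1^(1/2:ℂ) * z2^(1/2:ℂ)).re
        + |(z0^(1/2:ℂ) * z1^(1/2:ℂ) * z2^(1/2:ℂ)).im| := by
      have h12 : 0 < ((z1^(1/2:ℂ)) * (z2^(1/2:ℂ))).re :=
        sector_mul_re (sector_sqrt h1) (sector_sqrt h2)
      have := sector_mul_abs (sector_sqrt h0) h12
      rw [← mul_assoc] at this
      exact this
    have hxy : z0^(1/2:ℂ) * z1^(1/2:ℂ) * z2^(1/2:ℂ) = -Complex.exp ((π:ℂ)*Complex.I/4) :=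
      eq_neg_of_add_eq_zero_left h
    rw [hxy, Complex.neg_re, Complex.neg_im, exp_quarter_re, exp_quarter_im, abs_neg,
      Real.cos_pi_div_four, Real.sin_pi_div_four,
      _root_.abs_of_nonneg (by positivity : (0:ℝ) ≤ Real.sqrt 2 / 2)] at hxpos
    linarith



lemma hpi2 : (π:ℂ)^2 = -((π:ℂ)*Complex.I)^2 := by
  rw [mul_pow, Complex.I_sq]
  ring

lemma hpiI0 : (π:ℂ)*Complex.I ≠ 0 :=
  mul_ne_zero (Complex.ofReal_ne_zero.2 Real.pi_ne_zero) Complex.I_ne_zero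

lemma final_scalar {b : ℂ} (hb : b.re < 0) (c' : ℂ) (δ : ℝ) :
    Sfun ((((↑π / -b) ^ (1/2:ℂ) * Complex.exp (-(π:ℂ)*Complex.I/12)) * (↑π / -((π:ℂ)*Complex.I + (π:ℂ)^2/b)) ^ (1/2:ℂ) * Complex.exp (-(π:ℂ)*Complex.I/12)) * (↑π / -((π:ℂ)*Complex.I + (π:ℂ)^2/((π:ℂ)*Complex.I + (π:ℂ)^2/b))) ^ (1/2:ℂ) * Complex.exp (-(π:ℂ)*Complex.I/12)) (((Polynomial.C (-(4*b)⁻¹) * Polynomial.X^2) - Polynomial.C ((4*((π:ℂ)*Complex.I + (π:ℂ)^2/b))⁻¹) * (Polynomial.C (0:ℂ) + Polynomial.C (-((π:ℂ)*Complex.I)/b) * Polynomial.X)^2) - Polynomial.C ((4*((π:ℂ)*Complex.I + (π:ℂ)^2/((π:ℂ)*Complex.I + (π:ℂ)^2/b)))⁻¹) * (Polynomial.C (-((π:ℂ)*Complex.I)*(0:ℂ)/((π:ℂ)*Complex.I + (π:ℂ)^2/b)) + Polynomial.C (-((π:ℂ)*Complex.I)*(-((π:ℂ)*Complex.I)/b)/((π:ℂ)*Complex.I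 + (π:ℂ)^2/b)) * Polynomial.X)^2) ((π:ℂ)*Complex.I + (π:ℂ)^2/((π:ℂ)*Complex.I + (π:ℂ)^2/((π:ℂ)*Complex.I + (π:ℂ)^2/b))) (-((π:ℂ)*Complex.I)*(-((π:ℂ)*Complex.I)*(-((π:ℂ)*Complex.I)/b)/((π:ℂ)*Complex.I + (π:ℂ)^2/b))/((π:ℂ)*Complex.I + (π:ℂ)^2/((π:ℂ)*Complex.I + (π:ℂ)^2/b))) (-((π:ℂ)*Complex.I)*(-((π:ℂ)*Complex.I)*(0:ℂ)/((π:ℂ)*Complex.I + (π:ℂ)^2/b))/((π:ℂ)*Complex.I + (π:ℂ)^2/((π:ℂ)*Complex.I + (π:ℂ)^2/b))) 1 r1 c' δ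
      = Complex.exp (b*(δ:ℂ)^2 + c'*(δ:ℂ)) := by
  have hb0 : b ≠ 0 := fun h => by rw [h] at hb; simp at hb
  have hb1re : (((π:ℂ)*Complex.I + (π:ℂ)^2/b)).re < 0 := Tb_re_neg hb
  have hb2re : (((π:ℂ)*Complex.I + (π:ℂ)^2/((π:ℂ)*Complex.I + (π:ℂ)^2/b))).re < 0 := Tb_re_neg hb1re
  have hb10 : ((π:ℂ)*Complex.I + (π:ℂ)^2/b) ≠ 0 := fun h => by rw [h] at hb1re; simp at hb1re
  have hb20 : ((π:ℂ)*Complex.I + (π:ℂ)^2/((π:ℂ)*Complex.I + (π:ℂ)^2/b)) ≠ 0 := fun h => by rw [h] at hb2re; simp at hb2re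
  have hb1u : (π:ℂ)*Complex.I + (-((π:ℂ)*Complex.I)^2)/b ≠ 0 := by rw [← hpi2]; exact hb10
  have hb2u : (π:ℂ)*Complex.I + (-((π:ℂ)*Complex.I)^2) /
      ((π:ℂ)*Complex.I + (-((π:ℂ)*Complex.I)^2)/b) ≠ 0 := by
    rw [← hpi2]
    exact hb20
  have hQ3 : Polynomial.eval c' (((Polynomial.C (-(4*b)⁻¹) * Polynomial.X^2) - Polynomial.C ((4*((π:ℂ)*Complex.I + (π:ℂ)^2/b))⁻¹) * (Polynomial.C (0:ℂ) + Polynomial.C (-((π:ℂ)*Complex.I)/b) * Polynomial.X)^2) - Polynomial.C ((4*((π:ℂ)*Complex.I + (π:ℂ)^2/((π:ℂ)*Complex.I + (π:ℂ)^2/b)))⁻¹) * (Polynomial.C (-((π:ℂ)*Complex.I)*(0:ℂ)/((π:ℂ)*Complex.I + (π:ℂ)^2/b)) + Polynomial.C (-((π:ℂ)*Complex.I)*(-((π:ℂ)*Complex.I)/b)/((π:ℂ)*Complex.I + (π:ℂ)^2/b)) * Polynomial.X)^2) = 0 := by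
    simp only [Polynomial.eval_sub, Polynomial.eval_mul, Polynomial.eval_C, Polynomial.eval_pow,
      Polynomial.eval_add, Polynomial.eval_X]
    rw [hpi2]
    generalize hu : (π:ℂ)*Complex.I = u at hb1u hb2u ⊢
    have hu0 : u ≠ 0 := hu ▸ hpiI0
    have h1' : u*b - u^2 ≠ 0 := by
      intro h
      apply hb1u
      field_simp
      linear_combination h
    have hbu : b - u ≠ 0 := fun h => h1' (by linear_combination u * h)
    have eb1 : u + -u^2/b = (u*b - u^2)/b := by
      field_simp
      ring
    have eb2 : u + -u^2/((u*b - u^2)/b) = -u^3/(u*b - u^2) := by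
      field_simp [hbu]
      ring
    rw [eb1, eb2]
    field_simp [hu0, h1', hbu]
    ring
  have hB3 : ((π:ℂ)*Complex.I + (π:ℂ)^2/((π:ℂ)*Complex.I + (π:ℂ)^2/((π:ℂ)*Complex.I + (π:ℂ)^2/b))) = b := by
    rw [hpi2]
    generalize hu : (π:ℂ)*Complex.I = u at hb1u hb2u ⊢
    have hu0 : u ≠ 0 := hu ▸ hpiI0
    have h1' : u*b - u^2 ≠ 0 := by
      intro h
      apply hb1u
      field_simp
      linear_combination h
    have hbu : b - u ≠ 0 := fun h => h1' (by linear_combination u * h)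
    have eb1 : u + -u^2/b = (u*b - u^2)/b := by
      field_simp
      ring
    have eb2 : u + -u^2/((u*b - u^2)/b) = -u^3/(u*b - u^2) := by
      field_simp [hbu]
      ring
    rw [eb1, eb2]
    field_simp [hu0, h1', hbu]
    ring
  have hV3 : (-((π:ℂ)*Complex.I)*(-((π:ℂ)*Complex.I)*(-((π:ℂ)*Complex.I)/b)/((π:ℂ)*Complex.I + (π:ℂ)^2/b))/((π:ℂ)*Complex.I + (π:ℂ)^2/((π:ℂ)*Complex.I + (π:ℂ)^2/b))) = 1 := by
    rw [hpi2]
    generalize hu : (π:ℂ)*Complex.I = u at hb1u hb2u ⊢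
    have hu0 : u ≠ 0 := hu ▸ hpiI0
    have h1' : u*b - u^2 ≠ 0 := by
      intro h
      apply hb1u
      field_simp
      linear_combination h
    have hbu : b - u ≠ 0 := fun h => h1' (by linear_combination u * h)
    have eb1 : u + -u^2/b = (u*b - u^2)/b := by
      field_simp
      ring
    have eb2 : u + -u^2/((u*b - u^2)/b) = -u^3/(u*b - u^2) := by
      field_simp [hbu]
      ring
    rw [eb1, eb2]
    field_simp [hu0, h1', hbu]
  have hW3 : (-((π:ℂ)*Complex.I)*(-((π:ℂ)*Complex.I)*(0:ℂ)/((π:ℂ)*Complex.I + (π:ℂ)^2/b))/((π:ℂ)*Complex.I + (π:ℂ)^2/((π:ℂ)*Complex.I + (π:ℂ)^2/b))) = 0 := by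
    simp
  have hden : (-b) * (-((π:ℂ)*Complex.I + (π:ℂ)^2/b)) * (-((π:ℂ)*Complex.I + (π:ℂ)^2/((π:ℂ)*Complex.I + (π:ℂ)^2/b))) = ((π:ℂ)*Complex.I)^3 := by
    rw [hpi2]
    generalize hu : (π:ℂ)*Complex.I = u at hb1u hb2u ⊢
    have hu0 : u ≠ 0 := hu ▸ hpiI0
    have h1' : u*b - u^2 ≠ 0 := by
      intro h
      apply hb1u
      field_simp
      linear_combination h
    have hbu : b - u ≠ 0 := fun h => h1' (by linear_combination u * h)
    have eb1 : u + -u^2/b = (u*b - u^2)/b := by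
      field_simp
      ring
    have eb2 : u + -u^2/((u*b - u^2)/b) = -u^3/(u*b - u^2) := by
      field_simp [hbu]
      ring
    rw [eb1, eb2]
    field_simp [hu0, h1', hbu]
  have hprod : ((π:ℂ)/(-b)) * ((π:ℂ)/(-((π:ℂ)*Complex.I + (π:ℂ)^2/b))) * ((π:ℂ)/(-((π:ℂ)*Complex.I + (π:ℂ)^2/((π:ℂ)*Complex.I + (π:ℂ)^2/b)))) = Complex.I := by
    rw [div_mul_div_comm, div_mul_div_comm, hden,
      show (π:ℂ)*π*π = (π:ℂ)^3 from by ring, mul_pow,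
      show Complex.I^3 = -Complex.I from by rw [pow_succ, Complex.I_sq]; ring,
      div_eq_iff (mul_ne_zero (pow_ne_zero _ (Complex.ofReal_ne_zero.2 Real.pi_ne_zero))
        (neg_ne_zero.2 Complex.I_ne_zero))]
    linear_combination (π:ℂ)^3 * Complex.I_sq
  have hs := sqrt3 (pi_div_neg_re_pos hb) (pi_div_neg_re_pos hb1re)
    (pi_div_neg_re_pos hb2re) hprod
  have he3 : Complex.exp (-(π:ℂ)*Complex.I/12) * Complex.exp (-(π:ℂ)*Complex.I/12) * Complex.exp (-(π:ℂ)*Complex.I/12) = Complex.exp (-(π:ℂ)*Complex.I/4) := by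
    rw [← Complex.exp_add, ← Complex.exp_add]
    congr 1
    ring
  have hK3 : ((((↑π / -b) ^ (1/2:ℂ) * Complex.exp (-(π:ℂ)*Complex.I/12)) * (↑π / -((π:ℂ)*Complex.I + (π:ℂ)^2/b)) ^ (1/2:ℂ) * Complex.exp (-(π:ℂ)*Complex.I/12)) * (↑π / -((π:ℂ)*Complex.I + (π:ℂ)^2/((π:ℂ)*Complex.I + (π:ℂ)^2/b))) ^ (1/2:ℂ) * Complex.exp (-(π:ℂ)*Complex.I/12)) = 1 := by
    calc ((((↑π / -b) ^ (1/2:ℂ) * Complex.exp (-(π:ℂ)*Complex.I/12)) * (↑π / -((π:ℂ)*Complex.I + (π:ℂ)^2/b)) ^ (1/2:ℂ) * Complex.exp (-(π:ℂ)*Complex.I/12)) * (↑π / -((π:ℂ)*Complex.I + (π:ℂ)^2/((π:ℂ)*Complex.I + (π:ℂ)^2/b))) ^ (1/2:ℂ) * Complex.exp (-(π:ℂ)*Complex.I/12))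
        = (((π:ℂ)/(-b))^(1/2:ℂ) * ((π:ℂ)/(-((π:ℂ)*Complex.I + (π:ℂ)^2/b)))^(1/2:ℂ) * ((π:ℂ)/(-((π:ℂ)*Complex.I + (π:ℂ)^2/((π:ℂ)*Complex.I + (π:ℂ)^2/b))))^(1/2:ℂ))
          * (Complex.exp (-(π:ℂ)*Complex.I/12) * Complex.exp (-(π:ℂ)*Complex.I/12) * Complex.exp (-(π:ℂ)*Complex.I/12)) := by ring
      _ = Complex.exp ((π:ℂ)*Complex.I/4) * Complex.exp (-(π:ℂ)*Complex.I/4) := by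
          rw [hs, he3]
      _ = 1 := by
          rw [← Complex.exp_add,
            show (π:ℂ)*Complex.I/4 + -(π:ℂ)*Complex.I/4 = 0 from by ring, Complex.exp_zero]
  rw [Sfun, Finset.sum_range_one, show Polynomial.eval c' (r1 0) = 1 from by simp [r1],
    pow_zero, mul_one, mul_one, hQ3, hK3, hB3, hV3, hW3, one_mul]
  congr 1
  ring

theorem atil3_atom {b : ℂ} (hb : b.re < 0) (n : ℕ) (c : ℂ) (δ : ℝ) :
    Atil (Atil (Atil (fun x : ℝ => (x:ℂ)^n * Complex.exp (b * (x:ℂ)^2 + c * (x:ℂ))))) δ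
      = (δ:ℂ)^n * Complex.exp (b * (δ:ℂ)^2 + c * (δ:ℂ)) := by
  have hb1re : (((π:ℂ)*Complex.I + (π:ℂ)^2/b)).re < 0 := Tb_re_neg hb
  have hb2re : (((π:ℂ)*Complex.I + (π:ℂ)^2/((π:ℂ)*Complex.I + (π:ℂ)^2/b))).re < 0 := Tb_re_neg hb1re
  rw [show Atil (fun x : ℝ => (x:ℂ)^n * Complex.exp (b * (x:ℂ)^2 + c * (x:ℂ)))
      = fun β => iteratedDeriv n (fun c' =>
          Sfun ((↑π / -b) ^ (1/2:ℂ) * Complex.exp (-(π:ℂ)*Complex.I/12)) (Polynomial.C (-(4*b)⁻¹) * Polynomial.X^2) ((π:ℂ)*Complex.I + (π:ℂ)^2/b) (-((π:ℂ)*Complex.I)/b) 0 1 r1 c' β) c from funext fun β => atil_atom_S hb n c β]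
  rw [show Atil (fun β => iteratedDeriv n (fun c' =>
        Sfun ((↑π / -b) ^ (1/2:ℂ) * Complex.exp (-(π:ℂ)*Complex.I/12)) (Polynomial.C (-(4*b)⁻¹) * Polynomial.X^2) ((π:ℂ)*Complex.I + (π:ℂ)^2/b) (-((π:ℂ)*Complex.I)/b) 0 1 r1 c' β) c)
      = fun γ => iteratedDeriv n (fun c' =>
          Sfun (((↑π / -b) ^ (1/2:ℂ) * Complex.exp (-(π:ℂ)*Complex.I/12)) * (↑π / -((π:ℂ)*Complex.I + (π:ℂ)^2/b)) ^ (1/2:ℂ) * Complex.exp (-(π:ℂ)*Complex.I/12)) ((Polynomial.C (-(4*b)⁻¹) * Polynomial.X^2) - Polynomial.C ((4*((π:ℂ)*Complex.I + (π:ℂ)^2/b))⁻¹) * (Polynomial.C (0:ℂ) + Polynomial.C (-((π:ℂ)*Complex.I)/b) * Polynomial.X)^2) ((π:ℂ)*Complex.I + (π:ℂ)^2/((π:ℂ)*Complex.I + (π:ℂ)^2/b)) (-((π:ℂ)*Complex.I)*(-((π:ℂ)*Complex.I)/b)/((π:ℂ)*Complex.I + (π:ℂ)^2/b)) (-((π:ℂ)*Complex.I)*(0:ℂ)/((π:ℂ)*Complex.I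 + (π:ℂ)^2/b)) 1 r1 c' γ) c
    from funext fun γ => stage hb1re ((↑π / -b) ^ (1/2:ℂ) * Complex.exp (-(π:ℂ)*Complex.I/12)) (Polynomial.C (-(4*b)⁻¹) * Polynomial.X^2) (-((π:ℂ)*Complex.I)/b) 0 n c γ]
  rw [stage hb2re (((↑π / -b) ^ (1/2:ℂ) * Complex.exp (-(π:ℂ)*Complex.I/12)) * (↑π / -((π:ℂ)*Complex.I + (π:ℂ)^2/b)) ^ (1/2:ℂ) * Complex.exp (-(π:ℂ)*Complex.I/12)) ((Polynomial.C (-(4*b)⁻¹) * Polynomial.X^2) - Polynomial.C ((4*((π:ℂ)*Complex.I + (π:ℂ)^2/b))⁻¹) * (Polynomial.C (0:ℂ) + Polynomial.C (-((π:ℂ)*Complex.I)/b) * Polynomial.X)^2) (-((π:ℂ)*Complex.I)*(-((π:ℂ)*Complex.I)/b)/((π:ℂ)*Complex.I + (π:ℂ)^2/b)) (-((π:ℂ)*Complex.I)*(0:ℂ)/((π:ℂ)*Complex.I + (π:ℂ)^2/b)) n c δ]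
  rw [show (fun c' => Sfun ((((↑π / -b) ^ (1/2:ℂ) * Complex.exp (-(π:ℂ)*Complex.I/12)) * (↑π / -((π:ℂ)*Complex.I + (π:ℂ)^2/b)) ^ (1/2:ℂ) * Complex.exp (-(π:ℂ)*Complex.I/12)) * (↑π / -((π:ℂ)*Complex.I + (π:ℂ)^2/((π:ℂ)*Complex.I + (π:ℂ)^2/b))) ^ (1/2:ℂ) * Complex.exp (-(π:ℂ)*Complex.I/12)) (((Polynomial.C (-(4*b)⁻¹) * Polynomial.X^2) - Polynomial.C ((4*((π:ℂ)*Complex.I + (π:ℂ)^2/b))⁻¹) * (Polynomial.C (0:ℂ) + Polynomial.C (-((π:ℂ)*Complex.I)/b) * Polynomial.X)^2) - Polynomial.C ((4*((π:ℂ)*Complex.I + (π:ℂ)^2/((π:ℂ)*Complex.I + (π:ℂ)^2/b)))⁻¹) * (Polynomial.C (-((π:ℂ)*Complex.I)*(0:ℂ)/((π:ℂ)*Complex.I + (π:ℂ)^2/b)) + Polynomial.C (-((π:ℂ)*Complex.I)*(-((π:ℂ)*Complex.I)/b)/((π:ℂ)*Complex.I + (π:ℂ)^2/b)) * Polynomial.X)^2)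 ((π:ℂ)*Complex.I + (π:ℂ)^2/((π:ℂ)*Complex.I + (π:ℂ)^2/((π:ℂ)*Complex.I + (π:ℂ)^2/b))) (-((π:ℂ)*Complex.I)*(-((π:ℂ)*Complex.I)*(-((π:ℂ)*Complex.I)/b)/((π:ℂ)*Complex.I + (π:ℂ)^2/b))/((π:ℂ)*Complex.I + (π:ℂ)^2/((π:ℂ)*Complex.I + (π:ℂ)^2/b))) (-((π:ℂ)*Complex.I)*(-((π:ℂ)*Complex.I)*(0:ℂ)/((π:ℂ)*Complex.I + (π:ℂ)^2/b))/((π:ℂ)*Complex.I + (π:ℂ)^2/((π:ℂ)*Complex.I + (π:ℂ)^2/b))) 1 r1 c' δ)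
      = fun c' => Complex.exp (b*(δ:ℂ)^2 + c'*(δ:ℂ)) from funext fun c' => final_scalar hb c' δ]
  rw [iter_exp_lin]

/-! Span machinery -/

def AtomSet : Set (ℝ → ℂ) := {g | ∃ (n : ℕ) (b c : ℂ), b.re < 0 ∧
  g = fun x : ℝ => (x:ℂ)^n * Complex.exp (b * (x:ℂ)^2 + c * (x:ℂ))}

lemma Atil_smul (a : ℂ) (f : ℝ → ℂ) : Atil (fun x => a * f x) = fun β => a * Atil f β := by
  funext β
  rw [Atil, Atil, ← integral_const_mul]
  congr 1
  funext α
  ring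

lemma Atil_finset_sum {ι : Type*} (T : Finset ι) (F : ι → ℝ → ℂ)
    (hF : ∀ i ∈ T, Integrable (F i)) :
    Atil (fun x => ∑ i ∈ T, F i x) = fun β => ∑ i ∈ T, Atil (F i) β := by
  funext β
  rw [Atil]
  have h1 : ∀ α : ℝ, Complex.exp (2 * (π : ℂ) * Complex.I * α * β) *
      Complex.exp ((π : ℂ) * Complex.I * (β : ℂ) ^ 2 - (π : ℂ) * Complex.I / 12) *
      (∑ i ∈ T, F i α)
      = ∑ i ∈ T, Complex.exp (2 * (π : ℂ) * Complex.I * α * β) *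
          Complex.exp ((π : ℂ) * Complex.I * (β : ℂ) ^ 2 - (π : ℂ) * Complex.I / 12) * F i α := by
    intro α
    rw [Finset.mul_sum]
  simp_rw [h1]
  rw [integral_finset_sum _ (fun i hi => integrable_kernel_mul (hF i hi) β)]
  rfl

lemma atil_atom_mem {b : ℂ} (hb : b.re < 0) (n : ℕ) (c : ℂ) :
    Atil (fun x : ℝ => (x:ℂ)^n * Complex.exp (b * (x:ℂ)^2 + c * (x:ℂ)))
      ∈ Submodule.span ℂ AtomSet := by
  have hb0 : b ≠ 0 := fun h => by rw [h] at hb; simp at hb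
  have hb1re : ((π:ℂ)*Complex.I + (π:ℂ)^2/b).re < 0 := Tb_re_neg hb
  set p : Polynomial ℂ := (gp b n).comp (Polynomial.C c + Polynomial.C (2*(π:ℂ)*Complex.I) *
    Polynomial.X) with hp
  have hfun : Atil (fun x : ℝ => (x:ℂ)^n * Complex.exp (b * (x:ℂ)^2 + c * (x:ℂ)))
      = fun β : ℝ => ∑ k ∈ Finset.range (p.natDegree + 1),
          ((↑π / -b) ^ (1/2 : ℂ) * Complex.exp (-(π:ℂ)*Complex.I/12 - c^2/(4*b)) * p.coeff k) *
          ((β:ℂ)^k * Complex.exp (((π:ℂ)*Complex.I + (π:ℂ)^2/b) * (β:ℂ)^2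
            + (-((π:ℂ)*Complex.I)*c/b) * (β:ℂ))) := by
    funext β
    rw [atil_atom hb n c β, iteratedDeriv_phi hb0]
    beta_reduce
    have heval : (gp b n).eval (c + 2*π*Complex.I*β) = p.eval (β:ℂ) := by
      rw [hp, Polynomial.eval_comp]
      simp
    rw [heval, Polynomial.eval_eq_sum_range, Finset.sum_mul, Finset.mul_sum, Finset.mul_sum]
    refine Finset.sum_congr rfl fun k _ => ?_
    have hexp : Complex.exp ((π:ℂ)*Complex.I*(β:ℂ)^2 - (π:ℂ)*Complex.I/12) *
        Complex.exp (-(c + 2*π*Complex.I*β)^2/(4*b))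
        = Complex.exp (-(π:ℂ)*Complex.I/12 - c^2/(4*b)) *
          Complex.exp (((π:ℂ)*Complex.I + (π:ℂ)^2/b) * (β:ℂ)^2
            + (-((π:ℂ)*Complex.I)*c/b) * (β:ℂ)) := by
      rw [← Complex.exp_add, ← Complex.exp_add]
      congr 1
      linear_combination (-(π:ℂ)^2*(β:ℂ)^2/b) * Complex.I_sq
    calc Complex.exp ((π:ℂ)*Complex.I*(β:ℂ)^2 - (π:ℂ)*Complex.I/12) *
          ((↑π / -b) ^ (1/2 : ℂ) * (p.coeff k * (β:ℂ)^k *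
            Complex.exp (-(c + 2*π*Complex.I*β)^2/(4*b))))
        = (Complex.exp ((π:ℂ)*Complex.I*(β:ℂ)^2 - (π:ℂ)*Complex.I/12) *
            Complex.exp (-(c + 2*π*Complex.I*β)^2/(4*b))) *
          ((↑π / -b) ^ (1/2 : ℂ) * (p.coeff k * (β:ℂ)^k)) := by ring
      _ = _ := by rw [hexp]; ring
  rw [hfun]
  have : (fun β : ℝ => ∑ k ∈ Finset.range (p.natDegree + 1),
      ((↑π / -b) ^ (1/2 : ℂ) * Complex.exp (-(π:ℂ)*Complex.I/12 - c^2/(4*b)) * p.coeff k) *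
        ((β:ℂ)^k * Complex.exp (((π:ℂ)*Complex.I + (π:ℂ)^2/b) * (β:ℂ)^2
          + (-((π:ℂ)*Complex.I)*c/b) * (β:ℂ))))
      = ∑ k ∈ Finset.range (p.natDegree + 1),
          ((↑π / -b) ^ (1/2 : ℂ) * Complex.exp (-(π:ℂ)*Complex.I/12 - c^2/(4*b)) * p.coeff k) •
          (fun β : ℝ => (β:ℂ)^k * Complex.exp (((π:ℂ)*Complex.I + (π:ℂ)^2/b) * (β:ℂ)^2
            + (-((π:ℂ)*Complex.I)*c/b) * (β:ℂ))) := by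
    funext β
    rw [Finset.sum_apply]
    rfl
  rw [this]
  apply Submodule.sum_mem
  intro k _
  apply Submodule.smul_mem
  apply Submodule.subset_span
  exact ⟨k, (π:ℂ)*Complex.I + (π:ℂ)^2/b, -((π:ℂ)*Complex.I)*c/b, hb1re, rfl⟩

lemma span_integrable {f : ℝ → ℂ} (hf : f ∈ Submodule.span ℂ AtomSet) : Integrable f := by
  obtain ⟨co, hsupp, hrep⟩ := Submodule.mem_span_set.1 hf
  have hfun : f = fun x => ∑ g ∈ co.support, co g * g x := by
    rw [← hrep]
    funext x
    rw [Finsupp.sum, Finset.sum_apply]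
    rfl
  rw [hfun]
  apply integrable_finset_sum
  intro g hg
  obtain ⟨n, b, cc, hbre, hgeq⟩ := hsupp hg
  rw [hgeq]
  exact (integrable_atom hbre n cc).const_mul _

lemma span_atil {f : ℝ → ℂ} (hf : f ∈ Submodule.span ℂ AtomSet) :
    Atil f ∈ Submodule.span ℂ AtomSet := by
  obtain ⟨co, hsupp, hrep⟩ := Submodule.mem_span_set.1 hf
  have hfun : f = fun x => ∑ g ∈ co.support, co g * g x := by
    rw [← hrep]
    funext x
    rw [Finsupp.sum, Finset.sum_apply]
    rfl
  have hint : ∀ g ∈ co.support, Integrable (fun x => co g * g x) := by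
    intro g hg
    obtain ⟨n, b, cc, hbre, hgeq⟩ := hsupp hg
    rw [hgeq]
    exact (integrable_atom hbre n cc).const_mul _
  rw [hfun, Atil_finset_sum co.support _ hint]
  have : (fun β : ℝ => ∑ g ∈ co.support, Atil (fun x => co g * g x) β)
      = ∑ g ∈ co.support, fun β : ℝ => Atil (fun x => co g * g x) β := by
    funext β
    rw [Finset.sum_apply]
  rw [this]
  apply Submodule.sum_mem
  intro g hg
  obtain ⟨n, b, cc, hbre, hgeq⟩ := hsupp hg
  have h1 : (fun β : ℝ => Atil (fun x => co g * g x) β)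
      = co g • (fun β : ℝ => Atil g β) := by
    funext β
    rw [Atil_smul (co g) g]
    rfl
  rw [h1]
  apply Submodule.smul_mem
  have : (fun β : ℝ => Atil g β) = Atil g := rfl
  rw [this, hgeq]
  exact atil_atom_mem hbre n cc

lemma InW_sub {f : ℝ → ℂ} (hf : InW f) : f ∈ Submodule.span ℂ AtomSet := by
  apply Submodule.span_le.2 ?_ hf
  rintro g ⟨A, B, P, hA, rfl⟩
  have hb : (-(A:ℂ)/2).re < 0 := by
    rw [show -(A:ℂ)/2 = (((-A/2 : ℝ)):ℂ) from by push_cast; ring, Complex.ofReal_re]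
    linarith
  have hrep : (fun x : ℝ => Complex.exp (-(A:ℂ)*(x:ℂ)^2/2 + B*x) * P.eval (x:ℂ))
      = ∑ k ∈ Finset.range (P.natDegree + 1), P.coeff k •
          (fun x : ℝ => (x:ℂ)^k * Complex.exp ((-(A:ℂ)/2) * (x:ℂ)^2 + B * (x:ℂ))) := by
    funext x
    rw [Finset.sum_apply]
    rw [Polynomial.eval_eq_sum_range, Finset.mul_sum]
    refine Finset.sum_congr rfl fun k _ => ?_
    rw [show -(A:ℂ)*(x:ℂ)^2/2 + B*(x:ℂ) = (-(A:ℂ)/2) * (x:ℂ)^2 + B * (x:ℂ) from by ring]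
    simp only [Pi.smul_apply, smul_eq_mul]
    ring
  rw [hrep]
  apply Submodule.sum_mem
  intro k _
  apply Submodule.smul_mem
  exact Submodule.subset_span ⟨k, -(A:ℂ)/2, B, hb, rfl⟩

end KA


/-- `Ã³ = id`: applying the Kashaev kernel transform three times to any
Gaussian-polynomial test function returns the function. -/
theorem Atil_cube_eq_id (f : ℝ → ℂ) (hf : InW f) (β : ℝ) :
    Atil (Atil (Atil f)) β = f β := by
  classical
  have hf' : f ∈ Submodule.span ℂ KA.AtomSet := KA.InW_sub hf
  obtain ⟨co, hsupp, hrep⟩ := Submodule.mem_span_set.1 hf'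
  have hfun : f = fun x => ∑ g ∈ co.support, co g * g x := by
    rw [← hrep]
    funext x
    rw [Finsupp.sum, Finset.sum_apply]
    rfl
  have hg1 : ∀ g ∈ co.support, Integrable (fun x => co g * g x) := by
    intro g hg
    obtain ⟨n, b, cc, hbre, hgeq⟩ := hsupp hg
    rw [hgeq]
    exact (KA.integrable_atom hbre n cc).const_mul _
  have hg2 : ∀ g ∈ co.support, Integrable (fun γ => co g * Atil g γ) := by
    intro g hg
    obtain ⟨n, b, cc, hbre, hgeq⟩ := hsupp hg
    apply Integrable.const_mul
    have : Atil g ∈ Submodule.span ℂ KA.AtomSet := by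
      rw [hgeq]
      exact KA.atil_atom_mem hbre n cc
    exact KA.span_integrable this
  have hg3 : ∀ g ∈ co.support, Integrable (fun γ => co g * Atil (Atil g) γ) := by
    intro g hg
    obtain ⟨n, b, cc, hbre, hgeq⟩ := hsupp hg
    apply Integrable.const_mul
    apply KA.span_integrable
    apply KA.span_atil
    rw [hgeq]
    exact KA.atil_atom_mem hbre n cc
  have step1 : Atil f = fun γ => ∑ g ∈ co.support, co g * Atil g γ := by
    rw [hfun, KA.Atil_finset_sum co.support _ hg1]
    funext γ
    exact Finset.sum_congr rfl fun g hg => by rw [KA.Atil_smul (co g) g]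
  have step2 : Atil (Atil f) = fun γ => ∑ g ∈ co.support, co g * Atil (Atil g) γ := by
    rw [step1, KA.Atil_finset_sum co.support _ hg2]
    funext γ
    exact Finset.sum_congr rfl fun g hg => by rw [KA.Atil_smul (co g) (Atil g)]
  have step3 : Atil (Atil (Atil f)) β
      = ∑ g ∈ co.support, co g * Atil (Atil (Atil g)) β := by
    rw [step2, KA.Atil_finset_sum co.support _ hg3]
    exact Finset.sum_congr rfl fun g hg => by rw [KA.Atil_smul (co g) (Atil (Atil g))]
  rw [step3, hfun]
  refine Finset.sum_congr rfl fun g hg => ?_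
  obtain ⟨n, b, cc, hbre, hgeq⟩ := hsupp hg
  rw [hgeq]
  rw [KA.atil3_atom hbre n cc β]
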